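/- Let A be an algebra over Ω and let λ ∈ ba(A)₊. If φ is a positive continuous linear functional on L¹(λ), then there exists μ ∈ ba(A)₊ with μ absolutely continuous with respect to λ such that φ(f) = ∫ f dμ for all f ∈ L¹(λ), and moreover sup{μ(B)/λ(B) : B ∈ A, λ(B) > 0} ≤ ‖φ‖. -/

import Mathlib

open Set Filter Topology

variable {Ω : Type*}

/-- `𝒜` is an algebra of subsets of `Ω`. -/
def IsAlg (𝒜 : Set (Set Ω)) : Prop :=
  ∅ ∈ 𝒜 ∧ Set.univ ∈ 𝒜 ∧ (∀ A ∈ 𝒜, Aᶜ ∈ 𝒜) ∧ ∀ A ∈ 𝒜, ∀ B ∈ 𝒜, A ∪ B ∈ 𝒜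

/-- bounded finitely additive set function (element of ba(𝒜)). -/
def IsFinAdd (𝒜 : Set (Set Ω)) (μ : Set Ω → ℝ) : Prop :=
  μ ∅ = 0 ∧
  (∀ A ∈ 𝒜, ∀ B ∈ 𝒜, Disjoint A B → μ (A ∪ B) = μ A + μ B) ∧
  ∃ C : ℝ, ∀ A ∈ 𝒜, |μ A| ≤ C

def IsPos (𝒜 : Set (Set Ω)) (μ : Set Ω → ℝ) : Prop := ∀ A ∈ 𝒜, 0 ≤ μ A

def IsCtblAdd (𝒜 : Set (Set Ω)) (μ : Set Ω → ℝ) : Prop :=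
  ∀ A : ℕ → Set Ω, (∀ n, A n ∈ 𝒜) → Pairwise (Function.onFun Disjoint A) →
    (⋃ n, A n) ∈ 𝒜 → HasSum (fun n => μ (A n)) (μ (⋃ n, A n))

/-- total variation of `μ` on `A`. -/
noncomputable def tv (𝒜 : Set (Set Ω)) (μ : Set Ω → ℝ) (A : Set Ω) : ℝ :=
  sSup {x | ∃ B ∈ 𝒜, B ⊆ A ∧ x = μ B - μ (A \ B)}

noncomputable def tvNorm (𝒜 : Set (Set Ω)) (μ : Set Ω → ℝ) : ℝ := tv 𝒜 μ Set.univ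

/-- `ν ≪ μ`, absolute continuity in the ε-δ sense. -/
def AC (𝒜 : Set (Set Ω)) (ν μ : Set Ω → ℝ) : Prop :=
  ∀ ε > (0:ℝ), ∃ δ > (0:ℝ), ∀ E ∈ 𝒜, tv 𝒜 μ E < δ → tv 𝒜 ν E < ε

/-- `μ ⊥ ν`, singularity in the ε sense. -/
def Sing (𝒜 : Set (Set Ω)) (μ ν : Set Ω → ℝ) : Prop :=
  ∀ ε > (0:ℝ), ∃ B ∈ 𝒜, tv 𝒜 μ Bᶜ + tv 𝒜 ν B < ε

/-- normalized total variation `|μ|/(1 ∨ ‖μ‖)`. -/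
noncomputable def nvar (𝒜 : Set (Set Ω)) (μ : Set Ω → ℝ) (A : Set Ω) : ℝ :=
  tv 𝒜 μ A / (1 ⊔ tvNorm 𝒜 μ)

/-- membership in `𝐀(M)`: countable convex combinations of normalized variations. -/
def MemAM (𝒜 : Set (Set Ω)) (M : Set (Set Ω → ℝ)) (m : Set Ω → ℝ) : Prop :=
  ∃ (μ : ℕ → Set Ω → ℝ) (α : ℕ → ℝ),
    (∀ n, μ n ∈ M) ∧ (∀ n, 0 ≤ α n) ∧ HasSum α 1 ∧
    ∀ A : Set Ω, m A = ∑' n, α n * nvar 𝒜 (μ n) A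

/-- membership in `𝐋(M)`. -/
def MemLM (𝒜 : Set (Set Ω)) (M : Set (Set Ω → ℝ)) (ν : Set Ω → ℝ) : Prop :=
  ∃ m, MemAM 𝒜 M m ∧ AC 𝒜 ν m

/-- order on ba(𝒜). -/
def baLE (𝒜 : Set (Set Ω)) (μ ν : Set Ω → ℝ) : Prop := ∀ A ∈ 𝒜, μ A ≤ ν A

/-- λ-completion of 𝒜. -/
def Completion (𝒜 : Set (Set Ω)) (l : Set Ω → ℝ) : Set (Set Ω) :=
  {B | ∀ ε > (0:ℝ), ∃ A ∈ 𝒜, ∃ A' ∈ 𝒜, A ⊆ B ∧ B ⊆ A' ∧ l (A' \ A) < ε}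

/-- the extension `λ̄` to the completion. -/
noncomputable def extOf (𝒜 : Set (Set Ω)) (l : Set Ω → ℝ) (B : Set Ω) : ℝ :=
  sSup {x | ∃ A ∈ 𝒜, A ⊆ B ∧ x = l A}

/-- λ-atom. -/
def IsLAtom (𝒜 : Set (Set Ω)) (l : Set Ω → ℝ) (B : Set Ω) : Prop :=
  B ∈ 𝒜 ∧ 0 < l B ∧ ∀ A ∈ 𝒜, A ⊆ B → l A = 0 ∨ l (B \ A) = 0

/-- simple 𝒜-measurable function. -/
def IsSimple (𝒜 : Set (Set Ω)) (f : Ω → ℝ) : Prop :=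
  (Set.range f).Finite ∧ ∀ c : ℝ, f ⁻¹' {c} ∈ 𝒜

/-- integral of a simple function. -/
noncomputable def simpleInt (μ : Set Ω → ℝ) (f : Ω → ℝ) : ℝ :=
  ∑ᶠ c : ℝ, c * μ (f ⁻¹' {c})

/-- outer measure associated with l on 𝒜. -/
noncomputable def outerOf (𝒜 : Set (Set Ω)) (l : Set Ω → ℝ) (S : Set Ω) : ℝ :=
  sInf {x | ∃ A ∈ 𝒜, S ⊆ A ∧ x = l A}

/-- Dunford–Schwartz approximating sequence for `f`. -/
def ApproxSeq (𝒜 : Set (Set Ω)) (l : Set Ω → ℝ) (f : Ω → ℝ) (g : ℕ → Ω → ℝ) : Prop :=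
  (∀ n, IsSimple 𝒜 (g n)) ∧
  (∀ ε > (0:ℝ), ∃ N, ∀ p ≥ N, ∀ q ≥ N, simpleInt l (fun x => |g p x - g q x|) < ε) ∧
  (∀ ε > (0:ℝ), Tendsto (fun n => outerOf 𝒜 l {x | ε ≤ |g n x - f x|}) atTop (nhds 0))

/-- membership in L¹(l). -/
def MemL1 (𝒜 : Set (Set Ω)) (l : Set Ω → ℝ) (f : Ω → ℝ) : Prop :=
  ∃ g, ApproxSeq 𝒜 l f g

/-- the Dunford–Schwartz integral. -/
noncomputable def dsInt (𝒜 : Set (Set Ω)) (l : Set Ω → ℝ) (f : Ω → ℝ) : ℝ :=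
  sInf {I | ∃ g, ApproxSeq 𝒜 l f g ∧ Tendsto (fun n => simpleInt l (g n)) atTop (nhds I)}

/-- L¹ seminorm distance. -/
noncomputable def l1dist (𝒜 : Set (Set Ω)) (l : Set Ω → ℝ) (f h : Ω → ℝ) : ℝ :=
  dsInt 𝒜 l (fun x => |f x - h x|)

/-- membership in the L¹(l)-closure of a set C of functions. -/
def InL1Closure (𝒜 : Set (Set Ω)) (l : Set Ω → ℝ) (C : Set (Ω → ℝ)) (f : Ω → ℝ) : Prop :=
  ∀ ε > (0:ℝ), ∃ h ∈ C, l1dist 𝒜 l f h < ε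

/-- the set C = K − Sim(𝒜)₊. -/
def ConeDiff (𝒜 : Set (Set Ω)) (K : Set (Ω → ℝ)) : Set (Ω → ℝ) :=
  {f | ∃ k ∈ K, ∃ s : Ω → ℝ, IsSimple 𝒜 s ∧ (∀ x, 0 ≤ s x) ∧ f = k - s}
namespace FRep
variable {Ω : Type*} {𝒜 : Set (Set Ω)}

lemma alg_empty (hA : IsAlg 𝒜) : (∅ : Set Ω) ∈ 𝒜 := hA.1
lemma alg_univ (hA : IsAlg 𝒜) : (Set.univ : Set Ω) ∈ 𝒜 := hA.2.1
lemma alg_compl (hA : IsAlg 𝒜) {A : Set Ω} (h : A ∈ 𝒜) : Aᶜ ∈ 𝒜 := hA.2.2.1 A h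
lemma alg_union (hA : IsAlg 𝒜) {A B : Set Ω} (h1 : A ∈ 𝒜) (h2 : B ∈ 𝒜) : A ∪ B ∈ 𝒜 :=
  hA.2.2.2 A h1 B h2
lemma alg_inter (hA : IsAlg 𝒜) {A B : Set Ω} (h1 : A ∈ 𝒜) (h2 : B ∈ 𝒜) : A ∩ B ∈ 𝒜 := by
  have := alg_compl hA (alg_union hA (alg_compl hA h1) (alg_compl hA h2))
  rwa [Set.compl_union, compl_compl, compl_compl] at this
lemma alg_diff (hA : IsAlg 𝒜) {A B : Set Ω} (h1 : A ∈ 𝒜) (h2 : B ∈ 𝒜) : A \ B ∈ 𝒜 :=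
  alg_inter hA h1 (alg_compl hA h2)

lemma alg_biUnion (hA : IsAlg 𝒜) {ι : Type*} {F : Finset ι} {A : ι → Set Ω}
    (h : ∀ i ∈ F, A i ∈ 𝒜) : (⋃ i ∈ F, A i) ∈ 𝒜 := by
  classical
  induction F using Finset.induction_on with
  | empty => simpa using alg_empty hA
  | @insert a F hnmem ih =>
    rw [Finset.set_biUnion_insert]
    exact alg_union hA (h a (Finset.mem_insert_self a F))
      (ih fun i hi => h i (Finset.mem_insert_of_mem hi))

/-- the indicator function -/
noncomputable def ind (B : Set Ω) : Ω → ℝ := Set.indicator B 1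

lemma ind_apply_mem {B : Set Ω} {x : Ω} (h : x ∈ B) : ind B x = 1 :=
  Set.indicator_of_mem h 1
lemma ind_apply_not_mem {B : Set Ω} {x : Ω} (h : x ∉ B) : ind B x = 0 :=
  Set.indicator_of_notMem h 1

lemma ind_nonneg (B : Set Ω) (x : Ω) : 0 ≤ ind B x := by
  by_cases h : x ∈ B
  · rw [ind_apply_mem h]; norm_num
  · rw [ind_apply_not_mem h]

lemma simple_const (hA : IsAlg 𝒜) (c : ℝ) : IsSimple 𝒜 (fun _ : Ω => c) := by
  constructor
  · exact (Set.finite_singleton c).subset (by rintro y ⟨x, rfl⟩; exact rfl)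
  · intro d
    by_cases h : c = d
    · subst h
      have : (fun _ : Ω => c) ⁻¹' {c} = Set.univ := by ext x; simp
      rw [this]; exact alg_univ hA
    · have : (fun _ : Ω => c) ⁻¹' {d} = ∅ := by ext x; simp [h]
      rw [this]; exact alg_empty hA

lemma simple_ind (hA : IsAlg 𝒜) {B : Set Ω} (hB : B ∈ 𝒜) : IsSimple 𝒜 (ind B) := by
  constructor
  · apply ((Set.finite_singleton (0:ℝ)).insert 1).subset
    rintro y ⟨x, rfl⟩
    by_cases h : x ∈ B
    · rw [ind_apply_mem h]; simp
    · rw [ind_apply_not_mem h]; simp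
  · intro c
    rcases eq_or_ne c 1 with rfl | h1
    · have : ind B ⁻¹' {1} = B := by
        ext x
        simp only [Set.mem_preimage, Set.mem_singleton_iff]
        by_cases h : x ∈ B
        · simp [ind_apply_mem h, h]
        · simp [ind_apply_not_mem h, h]
      rwa [this]
    rcases eq_or_ne c 0 with rfl | h0
    · have : ind B ⁻¹' {0} = Bᶜ := by
        ext x
        simp only [Set.mem_preimage, Set.mem_singleton_iff, Set.mem_compl_iff]
        by_cases h : x ∈ B
        · simp [ind_apply_mem h, h]
        · simp [ind_apply_not_mem h, h]
      rw [this]; exact alg_compl hA hB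
    · have : ind B ⁻¹' {c} = ∅ := by
        ext x
        simp only [Set.mem_preimage, Set.mem_singleton_iff, Set.mem_empty_iff_false,
          iff_false]
        by_cases h : x ∈ B
        · rw [ind_apply_mem h]; exact Ne.symm h1
        · rw [ind_apply_not_mem h]; exact Ne.symm h0
      rw [this]; exact alg_empty hA

/-- unary composition preserves simplicity -/
lemma simple_comp1 (hA : IsAlg 𝒜) {a : Ω → ℝ} (ha : IsSimple 𝒜 a) (g : ℝ → ℝ) :
    IsSimple 𝒜 (fun x => g (a x)) := by
  classical
  obtain ⟨hfin, hmeas⟩ := ha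
  constructor
  · apply (hfin.image g).subset
    rintro y ⟨x, rfl⟩; exact ⟨a x, ⟨x, rfl⟩, rfl⟩
  · intro c
    have : (fun x => g (a x)) ⁻¹' {c} =
        ⋃ u ∈ hfin.toFinset.filter (fun u => g u = c), a ⁻¹' {u} := by
      ext x
      simp only [Set.mem_preimage, Set.mem_singleton_iff, Set.mem_iUnion, Finset.mem_filter,
        Set.Finite.mem_toFinset]
      constructor
      · intro h; exact ⟨a x, ⟨⟨x, rfl⟩, h⟩, rfl⟩
      · rintro ⟨u, ⟨_, hu⟩, rfl⟩; exact hu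
    rw [this]
    exact alg_biUnion hA fun u _ => hmeas u

/-- binary composition preserves simplicity -/
lemma simple_comp2 (hA : IsAlg 𝒜) {a b : Ω → ℝ} (ha : IsSimple 𝒜 a) (hb : IsSimple 𝒜 b)
    (op : ℝ → ℝ → ℝ) : IsSimple 𝒜 (fun x => op (a x) (b x)) := by
  classical
  obtain ⟨hafin, hameas⟩ := ha
  obtain ⟨hbfin, hbmeas⟩ := hb
  constructor
  · apply ((hafin.prod hbfin).image (fun p => op p.1 p.2)).subset
    rintro y ⟨x, rfl⟩; exact ⟨(a x, b x), ⟨⟨x, rfl⟩, ⟨x, rfl⟩⟩, rfl⟩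
  · intro c
    have : (fun x => op (a x) (b x)) ⁻¹' {c} =
        ⋃ p ∈ (hafin.toFinset ×ˢ hbfin.toFinset).filter (fun p => op p.1 p.2 = c),
          a ⁻¹' {p.1} ∩ b ⁻¹' {p.2} := by
      ext x
      simp only [Set.mem_preimage, Set.mem_singleton_iff, Set.mem_iUnion, Finset.mem_filter,
        Finset.mem_product, Set.Finite.mem_toFinset, Set.mem_inter_iff]
      constructor
      · intro h; exact ⟨(a x, b x), ⟨⟨⟨x, rfl⟩, ⟨x, rfl⟩⟩, h⟩, rfl, rfl⟩
      · rintro ⟨⟨u, v⟩, ⟨_, hop⟩, h1, h2⟩; rw [← h1, ← h2] at hop; exact hop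
    rw [this]
    exact alg_biUnion hA fun p _ => alg_inter hA (hameas p.1) (hbmeas p.2)

lemma simple_add (hA : IsAlg 𝒜) {a b : Ω → ℝ} (ha : IsSimple 𝒜 a) (hb : IsSimple 𝒜 b) :
    IsSimple 𝒜 (a + b) := simple_comp2 hA ha hb (· + ·)

lemma simple_sub (hA : IsAlg 𝒜) {a b : Ω → ℝ} (ha : IsSimple 𝒜 a) (hb : IsSimple 𝒜 b) :
    IsSimple 𝒜 (a - b) := simple_comp2 hA ha hb (· - ·)

lemma simple_abs (hA : IsAlg 𝒜) {a : Ω → ℝ} (ha : IsSimple 𝒜 a) :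
    IsSimple 𝒜 (fun x => |a x|) := simple_comp1 hA ha abs

lemma simple_smul (hA : IsAlg 𝒜) {a : Ω → ℝ} (ha : IsSimple 𝒜 a) (c : ℝ) :
    IsSimple 𝒜 (c • a) := simple_comp1 hA ha (c * ·)

lemma simple_mul (hA : IsAlg 𝒜) {a b : Ω → ℝ} (ha : IsSimple 𝒜 a) (hb : IsSimple 𝒜 b) :
    IsSimple 𝒜 (fun x => a x * b x) := simple_comp2 hA ha hb (· * ·)

end FRep
namespace FRep
variable {Ω : Type*} {𝒜 : Set (Set Ω)} {m : Set Ω → ℝ}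

lemma preim_empty {a : Ω → ℝ} {c : ℝ} (h : c ∉ Set.range a) : a ⁻¹' {c} = ∅ := by
  ext x; simp only [Set.mem_preimage, Set.mem_singleton_iff, Set.mem_empty_iff_false, iff_false]
  exact fun hc => h ⟨x, hc⟩

lemma simpleInt_eq_sum (hm0 : m ∅ = 0) {a : Ω → ℝ} {G : Finset ℝ}
    (hG : Set.range a ⊆ ↑G) : simpleInt m a = ∑ c ∈ G, c * m (a ⁻¹' {c}) := by
  apply finsum_eq_sum_of_support_subset
  intro c hc
  by_contra hcG
  apply hc
  show c * m (a ⁻¹' {c}) = 0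
  rw [preim_empty (fun hr => hcG (hG hr)), hm0, mul_zero]

lemma finadd_biUnion (hA : IsAlg 𝒜) (hm : IsFinAdd 𝒜 m) {ι : Type*} {F : Finset ι}
    {A : ι → Set Ω} (hmem : ∀ i ∈ F, A i ∈ 𝒜)
    (hdisj : ∀ i ∈ F, ∀ j ∈ F, i ≠ j → Disjoint (A i) (A j)) :
    m (⋃ i ∈ F, A i) = ∑ i ∈ F, m (A i) := by
  classical
  induction F using Finset.induction_on with
  | empty => simpa using hm.1
  | @insert a F hnmem ih =>
    rw [Finset.set_biUnion_insert, Finset.sum_insert hnmem]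
    have hrest : (⋃ i ∈ F, A i) ∈ 𝒜 :=
      alg_biUnion hA fun i hi => hmem i (Finset.mem_insert_of_mem hi)
    have hdis : Disjoint (A a) (⋃ i ∈ F, A i) := by
      rw [Set.disjoint_iUnion_right]
      intro i
      rw [Set.disjoint_iUnion_right]
      intro hi
      exact hdisj a (Finset.mem_insert_self a F) i (Finset.mem_insert_of_mem hi)
        (by rintro rfl; exact hnmem hi)
    rw [hm.2.1 (A a) (hmem a (Finset.mem_insert_self a F)) _ hrest hdis,
      ih (fun i hi => hmem i (Finset.mem_insert_of_mem hi))
        (fun i hi j hj hij => hdisj i (Finset.mem_insert_of_mem hi) j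
          (Finset.mem_insert_of_mem hj) hij)]

/-- partition of a set `S ∈ 𝒜` by the level sets of a simple function. -/
lemma measure_partition (hA : IsAlg 𝒜) (hm : IsFinAdd 𝒜 m) {b : Ω → ℝ} (hb : IsSimple 𝒜 b)
    {S : Set Ω} (hS : S ∈ 𝒜) :
    m S = ∑ v ∈ hb.1.toFinset, m (S ∩ b ⁻¹' {v}) := by
  classical
  have hU : S = ⋃ v ∈ hb.1.toFinset, S ∩ b ⁻¹' {v} := by
    ext x
    simp only [Set.mem_iUnion, Set.mem_inter_iff, Set.mem_preimage, Set.mem_singleton_iff,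
      Set.Finite.mem_toFinset]
    constructor
    · intro hx; exact ⟨b x, ⟨x, rfl⟩, hx, rfl⟩
    · rintro ⟨v, _, hx, _⟩; exact hx
  conv_lhs => rw [hU]
  apply finadd_biUnion hA hm
  · intro v _; exact alg_inter hA hS (hb.2 v)
  · intro i _ j _ hij
    rw [Set.disjoint_left]
    rintro x ⟨_, hxi⟩ ⟨_, hxj⟩
    simp only [Set.mem_preimage, Set.mem_singleton_iff] at hxi hxj
    exact hij (hxi ▸ hxj ▸ rfl)

lemma simpleInt_add (hA : IsAlg 𝒜) (hm : IsFinAdd 𝒜 m) {a b : Ω → ℝ}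
    (ha : IsSimple 𝒜 a) (hb : IsSimple 𝒜 b) :
    simpleInt m (a + b) = simpleInt m a + simpleInt m b := by
  classical
  set Fa := ha.1.toFinset with hFa
  set Fb := hb.1.toFinset with hFb
  set P := Fa ×ˢ Fb with hP
  set G := P.image (fun p => p.1 + p.2) with hG
  set cell : ℝ × ℝ → Set Ω := fun p => a ⁻¹' {p.1} ∩ b ⁻¹' {p.2} with hcell
  have hcellmem : ∀ p : ℝ × ℝ, cell p ∈ 𝒜 := fun p => alg_inter hA (ha.2 p.1) (hb.2 p.2)
  have hcelldisj : ∀ p q : ℝ × ℝ, p ≠ q → Disjoint (cell p) (cell q) := by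
    intro p q hpq
    rw [Set.disjoint_left]
    rintro x ⟨h1, h2⟩ ⟨h3, h4⟩
    simp only [Set.mem_preimage, Set.mem_singleton_iff] at h1 h2 h3 h4
    exact hpq (Prod.ext (h1 ▸ h3 ▸ rfl) (h2 ▸ h4 ▸ rfl))
  -- decomposition of level sets of a + b
  have hlevel : ∀ c : ℝ, (a + b) ⁻¹' {c} =
      ⋃ p ∈ P.filter (fun p => p.1 + p.2 = c), cell p := by
    intro c
    ext x
    rw [Set.mem_preimage, Set.mem_singleton_iff, Pi.add_apply]
    constructor
    · intro h
      apply Set.mem_iUnion₂.2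
      refine ⟨(a x, b x), ?_, ⟨rfl, rfl⟩⟩
      rw [Finset.mem_filter]
      refine ⟨Finset.mem_product.2 ⟨?_, ?_⟩, h⟩
      · exact (Set.Finite.mem_toFinset _).2 ⟨x, rfl⟩
      · exact (Set.Finite.mem_toFinset _).2 ⟨x, rfl⟩
    · intro h
      obtain ⟨p, hp, hx⟩ := Set.mem_iUnion₂.1 h
      obtain ⟨h1, h2⟩ := hx
      rw [Set.mem_preimage, Set.mem_singleton_iff] at h1 h2
      rw [h1, h2]
      exact (Finset.mem_filter.1 hp).2
  have hmlevel : ∀ c : ℝ, m ((a + b) ⁻¹' {c}) =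
      ∑ p ∈ P.filter (fun p => p.1 + p.2 = c), m (cell p) := by
    intro c
    rw [hlevel c]
    exact finadd_biUnion hA hm (fun p _ => hcellmem p)
      (fun p _ q _ hpq => hcelldisj p q hpq)
  have hrange : Set.range (a + b) ⊆ ↑G := by
    rintro y ⟨x, rfl⟩
    simp only [hG, Finset.coe_image, Set.mem_image, Finset.mem_coe]
    refine ⟨(a x, b x), ?_, rfl⟩
    simp only [hP, Finset.mem_product, hFa, hFb, Set.Finite.mem_toFinset]
    exact ⟨⟨x, rfl⟩, ⟨x, rfl⟩⟩
  rw [simpleInt_eq_sum hm.1 hrange]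
  have step3 : ∑ c ∈ G, c * m ((a + b) ⁻¹' {c}) =
      ∑ p ∈ P, (p.1 + p.2) * m (cell p) := by
    rw [← Finset.sum_fiberwise_of_maps_to (g := fun p : ℝ × ℝ => p.1 + p.2) (t := G)
      (fun p hp => Finset.mem_image_of_mem _ hp) (fun p => (p.1 + p.2) * m (cell p))]
    apply Finset.sum_congr rfl
    intro c _
    rw [hmlevel c, Finset.mul_sum]
    apply Finset.sum_congr rfl
    intro p hp
    rw [(Finset.mem_filter.1 hp).2]
  rw [step3]
  have split : ∑ p ∈ P, (p.1 + p.2) * m (cell p) =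
      (∑ p ∈ P, p.1 * m (cell p)) + ∑ p ∈ P, p.2 * m (cell p) := by
    rw [← Finset.sum_add_distrib]
    apply Finset.sum_congr rfl
    intro p _; ring
  rw [split]
  congr 1
  · rw [hP, Finset.sum_product]
    rw [simpleInt_eq_sum hm.1 (G := Fa) (fun y hy => (Set.Finite.mem_toFinset _).2 hy)]
    apply Finset.sum_congr rfl
    intro u _
    rw [measure_partition hA hm hb (ha.2 u), Finset.mul_sum, ← hFb]
  · rw [hP, Finset.sum_product_right]
    rw [simpleInt_eq_sum hm.1 (G := Fb) (fun y hy => (Set.Finite.mem_toFinset _).2 hy)]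
    apply Finset.sum_congr rfl
    intro v _
    rw [measure_partition hA hm ha (hb.2 v), Finset.mul_sum, ← hFa]
    apply Finset.sum_congr rfl
    intro u _
    rw [Set.inter_comm]

end FRep
namespace FRep
variable {Ω : Type*} {𝒜 : Set (Set Ω)} {m : Set Ω → ℝ}

lemma simpleInt_const (hm0 : m ∅ = 0) (hAu : (Set.univ : Set Ω) ∈ 𝒜) (c : ℝ) :
    simpleInt m (fun _ : Ω => c) = c * m Set.univ := by
  rw [simpleInt_eq_sum hm0 (G := {c}) (by rintro y ⟨x, rfl⟩; simp)]
  rw [Finset.sum_singleton]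
  have : (fun _ : Ω => c) ⁻¹' {c} = Set.univ := by ext x; simp
  rw [this]

lemma simpleInt_zero (hm0 : m ∅ = 0) : simpleInt m (fun _ : Ω => (0:ℝ)) = 0 := by
  rw [simpleInt_eq_sum hm0 (G := {0}) (by rintro y ⟨x, rfl⟩; simp), Finset.sum_singleton,
    zero_mul]

lemma simpleInt_nonneg (hm0 : m ∅ = 0) (hmp : IsPos 𝒜 m) {a : Ω → ℝ} (ha : IsSimple 𝒜 a)
    (hpos : ∀ x, 0 ≤ a x) : 0 ≤ simpleInt m a := by
  classical
  rw [simpleInt_eq_sum hm0 (G := ha.1.toFinset)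
    (fun y hy => (Set.Finite.mem_toFinset _).2 hy)]
  apply Finset.sum_nonneg
  intro c hc
  obtain ⟨x, rfl⟩ := (Set.Finite.mem_toFinset _).1 hc
  exact mul_nonneg (hpos x) (hmp _ (ha.2 (a x)))

lemma simpleInt_neg (hA : IsAlg 𝒜) (hm : IsFinAdd 𝒜 m) {a : Ω → ℝ} (ha : IsSimple 𝒜 a) :
    simpleInt m (-a) = - simpleInt m a := by
  have hna : IsSimple 𝒜 (-a) := simple_comp1 hA ha Neg.neg
  have h0 : a + (-a) = (fun _ : Ω => (0:ℝ)) := by funext x; simp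
  have := simpleInt_add hA hm ha hna
  rw [h0, simpleInt_zero hm.1] at this
  linarith

lemma simpleInt_sub (hA : IsAlg 𝒜) (hm : IsFinAdd 𝒜 m) {a b : Ω → ℝ}
    (ha : IsSimple 𝒜 a) (hb : IsSimple 𝒜 b) :
    simpleInt m (a - b) = simpleInt m a - simpleInt m b := by
  have h : (a - b) + b = a := by funext x; simp
  have h2 := simpleInt_add hA hm (simple_sub hA ha hb) hb
  rw [h] at h2
  linarith

lemma simpleInt_mono (hA : IsAlg 𝒜) (hm : IsFinAdd 𝒜 m) (hmp : IsPos 𝒜 m) {a b : Ω → ℝ}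
    (ha : IsSimple 𝒜 a) (hb : IsSimple 𝒜 b) (hab : ∀ x, a x ≤ b x) :
    simpleInt m a ≤ simpleInt m b := by
  have h1 : simpleInt m (b - a) = simpleInt m b - simpleInt m a :=
    simpleInt_sub hA hm hb ha
  have h2 : 0 ≤ simpleInt m (b - a) :=
    simpleInt_nonneg hm.1 hmp (simple_sub hA hb ha) (fun x => by simp [hab x])
  linarith

lemma abs_simpleInt_le (hA : IsAlg 𝒜) (hm : IsFinAdd 𝒜 m) (hmp : IsPos 𝒜 m) {a : Ω → ℝ}
    (ha : IsSimple 𝒜 a) : |simpleInt m a| ≤ simpleInt m (fun x => |a x|) := by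
  have habs : IsSimple 𝒜 (fun x => |a x|) := simple_abs hA ha
  rw [abs_le]
  constructor
  · have : simpleInt m (-a) ≤ simpleInt m (fun x => |a x|) :=
      simpleInt_mono hA hm hmp (simple_comp1 hA ha Neg.neg) habs
        (fun x => by simp [neg_le_abs])
    rw [simpleInt_neg hA hm ha] at this
    linarith
  · exact simpleInt_mono hA hm hmp ha habs (fun x => le_abs_self (a x))

lemma simpleInt_smul (hm0 : m ∅ = 0) {a : Ω → ℝ} (ha : IsSimple 𝒜 a) (c : ℝ) :
    simpleInt m (c • a) = c * simpleInt m a := by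
  classical
  rcases eq_or_ne c 0 with rfl | hc
  · have : (0:ℝ) • a = (fun _ : Ω => (0:ℝ)) := by funext x; simp
    rw [this, simpleInt_zero hm0, zero_mul]
  · set Fa := ha.1.toFinset with hFa
    have hrange : Set.range (c • a) ⊆ ↑(Fa.image (c * ·)) := by
      rintro y ⟨x, rfl⟩
      simp only [Finset.coe_image, Set.mem_image, Finset.mem_coe]
      exact ⟨a x, (Set.Finite.mem_toFinset _).2 ⟨x, rfl⟩, rfl⟩
    rw [simpleInt_eq_sum hm0 hrange,
      Finset.sum_image (by intro u _ v _ h; exact mul_left_cancel₀ hc h)]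
    rw [simpleInt_eq_sum hm0 (G := Fa) (fun y hy => (Set.Finite.mem_toFinset _).2 hy),
      Finset.mul_sum]
    apply Finset.sum_congr rfl
    intro u _
    have hpre : (c • a) ⁻¹' {c * u} = a ⁻¹' {u} := by
      ext x
      simp only [Set.mem_preimage, Set.mem_singleton_iff, Pi.smul_apply, smul_eq_mul]
      exact ⟨fun h => mul_left_cancel₀ hc h, fun h => by rw [h]⟩
    rw [hpre]; ring

lemma simpleInt_ind (hm : IsFinAdd 𝒜 m) {B : Set Ω} (hB : B ∈ 𝒜) :
    simpleInt m (ind B) = m B := by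
  have hrange : Set.range (ind B) ⊆ ↑({0, 1} : Finset ℝ) := by
    rintro y ⟨x, rfl⟩
    by_cases h : x ∈ B
    · rw [ind_apply_mem h]; simp
    · rw [ind_apply_not_mem h]; simp
  rw [simpleInt_eq_sum hm.1 hrange]
  have hpre1 : ind B ⁻¹' {1} = B := by
    ext x
    simp only [Set.mem_preimage, Set.mem_singleton_iff]
    by_cases h : x ∈ B
    · simp [ind_apply_mem h, h]
    · simp [ind_apply_not_mem h, h]
  rw [Finset.sum_insert (by norm_num), Finset.sum_singleton, hpre1]
  ring

lemma simpleInt_smul_ind (hA : IsAlg 𝒜) (hm : IsFinAdd 𝒜 m) {B : Set Ω} (hB : B ∈ 𝒜) (c : ℝ) :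
    simpleInt m (c • ind B) = c * m B := by
  rw [simpleInt_smul hm.1 (simple_ind hA hB), simpleInt_ind hm hB]

/-- comparison of integrals with respect to two measures -/
lemma simpleInt_mono_measure {m' : Set Ω → ℝ} (hm0 : m ∅ = 0) (hm0' : m' ∅ = 0)
    (hle : ∀ A ∈ 𝒜, m A ≤ m' A) {a : Ω → ℝ} (ha : IsSimple 𝒜 a) (hpos : ∀ x, 0 ≤ a x) :
    simpleInt m a ≤ simpleInt m' a := by
  classical
  rw [simpleInt_eq_sum hm0 (G := ha.1.toFinset) (fun y hy => (Set.Finite.mem_toFinset _).2 hy),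
    simpleInt_eq_sum hm0' (G := ha.1.toFinset) (fun y hy => (Set.Finite.mem_toFinset _).2 hy)]
  apply Finset.sum_le_sum
  intro c hc
  obtain ⟨x, rfl⟩ := (Set.Finite.mem_toFinset _).1 hc
  exact mul_le_mul_of_nonneg_left (hle _ (ha.2 (a x))) (hpos x)

lemma simpleInt_scale_measure (hm0 : m ∅ = 0) (K : ℝ) {a : Ω → ℝ}
    (hfin : (Set.range a).Finite) :
    simpleInt (fun A => K * m A) a = K * simpleInt m a := by
  classical
  have h1 : simpleInt (fun A => K * m A) a =
      ∑ c ∈ hfin.toFinset, c * (K * m (a ⁻¹' {c})) := by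
    exact simpleInt_eq_sum (m := fun A => K * m A) (by show K * m ∅ = 0; rw [hm0, mul_zero])
      (G := hfin.toFinset) (fun y hy => (Set.Finite.mem_toFinset _).2 hy)
  have h2 : simpleInt m a = ∑ c ∈ hfin.toFinset, c * m (a ⁻¹' {c}) :=
    simpleInt_eq_sum hm0 (G := hfin.toFinset) (fun y hy => (Set.Finite.mem_toFinset _).2 hy)
  rw [h1, h2, Finset.mul_sum]
  apply Finset.sum_congr rfl
  intro c _; ring

end FRep
namespace FRep
variable {Ω : Type*} {𝒜 : Set (Set Ω)} {m : Set Ω → ℝ}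

lemma m_mono (hA : IsAlg 𝒜) (hm : IsFinAdd 𝒜 m) (hmp : IsPos 𝒜 m) {A B : Set Ω}
    (hAm : A ∈ 𝒜) (hBm : B ∈ 𝒜) (hAB : A ⊆ B) : m A ≤ m B := by
  have hd : B = A ∪ (B \ A) := by rw [Set.union_diff_cancel hAB]
  have : m B = m A + m (B \ A) := by
    conv_lhs => rw [hd]
    exact hm.2.1 A hAm _ (alg_diff hA hBm hAm) Set.disjoint_sdiff_right
  have h0 : 0 ≤ m (B \ A) := hmp _ (alg_diff hA hBm hAm)
  linarith

lemma m_union_le (hA : IsAlg 𝒜) (hm : IsFinAdd 𝒜 m) (hmp : IsPos 𝒜 m) {A B : Set Ω}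
    (hAm : A ∈ 𝒜) (hBm : B ∈ 𝒜) : m (A ∪ B) ≤ m A + m B := by
  have h1 : A ∪ B = A ∪ (B \ A) := by rw [Set.union_diff_self]
  have h2 : m (A ∪ B) = m A + m (B \ A) := by
    rw [h1]; exact hm.2.1 A hAm _ (alg_diff hA hBm hAm) Set.disjoint_sdiff_right
  have h3 : m (B \ A) ≤ m B := m_mono hA hm hmp (alg_diff hA hBm hAm) hBm Set.diff_subset
  linarith


lemma outer_set_nonempty (hA : IsAlg 𝒜) (S : Set Ω) : {x | ∃ A ∈ 𝒜, S ⊆ A ∧ x = m A}.Nonempty :=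
  ⟨m Set.univ, Set.univ, alg_univ hA, Set.subset_univ S, rfl⟩

lemma outer_set_bddBelow (hmp : IsPos 𝒜 m) (S : Set Ω) : BddBelow {x | ∃ A ∈ 𝒜, S ⊆ A ∧ x = m A} := by
  refine ⟨0, ?_⟩
  rintro x ⟨A, hAm, _, rfl⟩
  exact hmp A hAm

lemma outer_nonneg (hA : IsAlg 𝒜) (hmp : IsPos 𝒜 m) (S : Set Ω) : 0 ≤ outerOf 𝒜 m S :=
  le_csInf (outer_set_nonempty hA S) (by rintro x ⟨A, hAm, _, rfl⟩; exact hmp A hAm)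

lemma outer_le (hmp : IsPos 𝒜 m) {S : Set Ω} {A : Set Ω} (hAm : A ∈ 𝒜) (hSA : S ⊆ A) :
    outerOf 𝒜 m S ≤ m A :=
  csInf_le (outer_set_bddBelow hmp S) ⟨A, hAm, hSA, rfl⟩

lemma outer_mono (hA : IsAlg 𝒜) (hmp : IsPos 𝒜 m) {S T : Set Ω} (hST : S ⊆ T) : outerOf 𝒜 m S ≤ outerOf 𝒜 m T := by
  apply le_csInf (outer_set_nonempty hA T)
  rintro x ⟨A, hAm, hTA, rfl⟩
  exact outer_le hmp hAm (hST.trans hTA)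

lemma exists_cover_lt (hA : IsAlg 𝒜) {S : Set Ω} {δ : ℝ} (h : outerOf 𝒜 m S < δ) :
    ∃ A ∈ 𝒜, S ⊆ A ∧ m A < δ := by
  obtain ⟨x, ⟨A, hAm, hSA, rfl⟩, hx⟩ := exists_lt_of_csInf_lt (outer_set_nonempty hA S) h
  exact ⟨A, hAm, hSA, hx⟩

lemma outer_subadd (hA : IsAlg 𝒜) (hm : IsFinAdd 𝒜 m) (hmp : IsPos 𝒜 m) {S S₁ S₂ : Set Ω} (hsub : S ⊆ S₁ ∪ S₂) :
    outerOf 𝒜 m S ≤ outerOf 𝒜 m S₁ + outerOf 𝒜 m S₂ := by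
  have key : ∀ ε > (0:ℝ), outerOf 𝒜 m S ≤ outerOf 𝒜 m S₁ + outerOf 𝒜 m S₂ + ε := by
    intro ε hε
    obtain ⟨x1, ⟨A1, hA1, hS1, rfl⟩, hlt1⟩ :=
      Real.lt_sInf_add_pos (outer_set_nonempty (m := m) hA S₁) (half_pos hε)
    obtain ⟨x2, ⟨A2, hA2, hS2, rfl⟩, hlt2⟩ :=
      Real.lt_sInf_add_pos (outer_set_nonempty (m := m) hA S₂) (half_pos hε)
    have hcov : S ⊆ A1 ∪ A2 := hsub.trans (Set.union_subset_union hS1 hS2)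
    calc outerOf 𝒜 m S ≤ m (A1 ∪ A2) := outer_le hmp (alg_union hA hA1 hA2) hcov
      _ ≤ m A1 + m A2 := m_union_le hA hm hmp hA1 hA2
      _ ≤ outerOf 𝒜 m S₁ + outerOf 𝒜 m S₂ + ε := by
          unfold outerOf
          linarith
  by_contra hcon
  push_neg at hcon
  have := key ((outerOf 𝒜 m S - (outerOf 𝒜 m S₁ + outerOf 𝒜 m S₂)) / 2) (by linarith)
  linarith

/-- a bound for a simple function -/
lemma simple_bound {a : Ω → ℝ} (hfin : (Set.range a).Finite) :
    ∃ M : ℝ, 0 ≤ M ∧ ∀ x, |a x| ≤ M := by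
  classical
  set F : Finset ℝ := (hfin.image abs).toFinset ∪ {0} with hF
  have hne : F.Nonempty := ⟨0, by simp [hF]⟩
  refine ⟨F.max' hne, ?_, ?_⟩
  · exact F.le_max' 0 (by simp [hF])
  · intro x
    apply F.le_max'
    simp only [hF, Finset.mem_union, Set.Finite.mem_toFinset]
    exact Or.inl ⟨a x, ⟨x, rfl⟩, rfl⟩

section ApproxMachinery
variable (hA : IsAlg 𝒜) (hm : IsFinAdd 𝒜 m) (hmp : IsPos 𝒜 m)
include hA hm hmp

/-- the restricted integral bound : ∫_A |s| ≤ M·m(A) -/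
lemma restr_int_le {s : Ω → ℝ} (hs : IsSimple 𝒜 s) {M : ℝ} (hM : ∀ x, |s x| ≤ M)
    {A : Set Ω} (hAm : A ∈ 𝒜) :
    simpleInt m (fun x => |s x| * ind A x) ≤ M * m A := by
  have h1 : simpleInt m (M • ind A) = M * m A := simpleInt_smul_ind hA hm hAm M
  rw [← h1]
  apply simpleInt_mono hA hm hmp
    (simple_mul hA (simple_abs hA hs) (simple_ind hA hAm))
    (simple_smul hA (simple_ind hA hAm) M)
  intro x
  simp only [Pi.smul_apply, smul_eq_mul]
  apply mul_le_mul_of_nonneg_right (hM x) (ind_nonneg A x)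

/-- restricted integral is at most the full integral (for nonneg simple integrand) -/
lemma restr_le_full {s : Ω → ℝ} (hs : IsSimple 𝒜 s) (hpos : ∀ x, 0 ≤ s x)
    {A : Set Ω} (hAm : A ∈ 𝒜) :
    simpleInt m (fun x => s x * ind A x) ≤ simpleInt m s := by
  apply simpleInt_mono hA hm hmp (simple_mul hA hs (simple_ind hA hAm)) hs
  intro x
  by_cases h : x ∈ A
  · rw [ind_apply_mem h, mul_one]
  · rw [ind_apply_not_mem h, mul_zero]; exact hpos x

/-- uniform absolute continuity of a Cauchy-in-mean sequence of simple functions -/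
lemma uac {g : ℕ → Ω → ℝ} (hsimp : ∀ n, IsSimple 𝒜 (g n))
    (hcauchy : ∀ ε > (0:ℝ), ∃ N, ∀ p ≥ N, ∀ q ≥ N,
      simpleInt m (fun x => |g p x - g q x|) < ε) :
    ∀ η > (0:ℝ), ∃ δ > (0:ℝ), ∀ n, ∀ A ∈ 𝒜, m A < δ →
      simpleInt m (fun x => |g n x| * ind A x) < η := by
  classical
  intro η hη
  obtain ⟨N, hN⟩ := hcauchy (η / 2) (by linarith)
  -- common bound for g 0, ..., g N
  have hMn : ∀ n, ∃ M : ℝ, 0 ≤ M ∧ ∀ x, |g n x| ≤ M := fun n => simple_bound (hsimp n).1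
  choose M hM0 hMb using hMn
  set Mmax : ℝ := ((Finset.range (N + 1)).image M).max' (by
    refine Finset.Nonempty.image ?_ M
    exact ⟨0, Finset.mem_range.2 (Nat.succ_pos N)⟩) with hMmax
  have hMmax0 : 0 ≤ Mmax := le_trans (hM0 0) (Finset.le_max' _ _ (Finset.mem_image_of_mem M
    (Finset.mem_range.2 (Nat.succ_pos N))))
  have hMle : ∀ n ≤ N, ∀ x, |g n x| ≤ Mmax := by
    intro n hn x
    exact le_trans (hMb n x) (Finset.le_max' _ _ (Finset.mem_image_of_mem M
      (Finset.mem_range.2 (Nat.lt_succ_of_le hn))))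
  refine ⟨η / (2 * (Mmax + 1)), by positivity, ?_⟩
  intro n A hAm hmA
  have hkey : ∀ k ≤ N, simpleInt m (fun x => |g k x| * ind A x) < η / 2 := by
    intro k hk
    have hq : 0 < η / (2 * (Mmax + 1)) := by positivity
    have h1 : simpleInt m (fun x => |g k x| * ind A x) ≤ Mmax * m A :=
      restr_int_le hA hm hmp (hsimp k) (hMle k hk) hAm
    have h2 : Mmax * m A ≤ Mmax * (η / (2 * (Mmax + 1))) :=
      mul_le_mul_of_nonneg_left hmA.le hMmax0
    have h3 : Mmax * (η / (2 * (Mmax + 1))) < (Mmax + 1) * (η / (2 * (Mmax + 1))) :=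
      mul_lt_mul_of_pos_right (lt_add_one Mmax) hq
    have hne0 : Mmax + 1 ≠ 0 := by positivity
    have h4 : (Mmax + 1) * (η / (2 * (Mmax + 1))) = η / 2 := by
      field_simp
    linarith
  rcases le_or_gt n N with hn | hn
  · exact lt_of_lt_of_le (hkey n hn) (by linarith)
  · -- n > N : compare with g N
    have hsplit : ∀ x, |g n x| * ind A x ≤
        |g n x - g N x| * ind A x + |g N x| * ind A x := by
      intro x
      rw [← add_mul]
      apply mul_le_mul_of_nonneg_right _ (ind_nonneg A x)
      calc |g n x| = |(g n x - g N x) + g N x| := by ring_nf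
        _ ≤ |g n x - g N x| + |g N x| := abs_add_le _ _
    have h1 : simpleInt m (fun x => |g n x| * ind A x) ≤
        simpleInt m (fun x => |g n x - g N x| * ind A x) +
        simpleInt m (fun x => |g N x| * ind A x) := by
      have hs1 : IsSimple 𝒜 (fun x => |g n x - g N x| * ind A x) :=
        simple_mul hA (simple_abs hA (simple_comp2 hA (hsimp n) (hsimp N) (· - ·)))
          (simple_ind hA hAm)
      have hs2 : IsSimple 𝒜 (fun x => |g N x| * ind A x) :=
        simple_mul hA (simple_abs hA (hsimp N)) (simple_ind hA hAm)
      have hadd := simpleInt_add (a := fun x => |g n x - g N x| * ind A x)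
        (b := fun x => |g N x| * ind A x) hA hm hs1 hs2
      rw [← hadd]
      apply simpleInt_mono (a := fun x => |g n x| * ind A x)
        (b := (fun x => |g n x - g N x| * ind A x) + (fun x => |g N x| * ind A x))
        hA hm hmp
        (simple_mul hA (simple_abs hA (hsimp n)) (simple_ind hA hAm))
        (simple_add hA hs1 hs2)
      intro x
      exact hsplit x
    have h2 : simpleInt m (fun x => |g n x - g N x| * ind A x) ≤
        simpleInt m (fun x => |g n x - g N x|) := by
      exact restr_le_full (s := fun x => |g n x - g N x|) hA hm hmp
        (simple_abs hA (simple_comp2 hA (hsimp n) (hsimp N) (· - ·)))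
        (fun x => abs_nonneg _) hAm
    have h3 : simpleInt m (fun x => |g n x - g N x|) < η / 2 :=
      hN n (le_of_lt hn) N (le_refl N)
    have h4 : simpleInt m (fun x => |g N x| * ind A x) < η / 2 := hkey N (le_refl N)
    linarith

end ApproxMachinery
end FRep
namespace FRep
variable {Ω : Type*} {𝒜 : Set (Set Ω)} {m : Set Ω → ℝ}

lemma outer_empty (hA : IsAlg 𝒜) (hm : IsFinAdd 𝒜 m) (hmp : IsPos 𝒜 m) :
    outerOf 𝒜 m (∅ : Set Ω) = 0 := by
  apply le_antisymm
  · have := outer_le hmp (alg_empty hA) (Set.Subset.refl (∅ : Set Ω))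
    rwa [hm.1] at this
  · exact outer_nonneg hA hmp ∅

lemma approx_cauchyInt (hA : IsAlg 𝒜) (hm : IsFinAdd 𝒜 m) (hmp : IsPos 𝒜 m)
    {f : Ω → ℝ} {g : ℕ → Ω → ℝ} (hg : ApproxSeq 𝒜 m f g) :
    CauchySeq (fun n => simpleInt m (g n)) := by
  rw [Metric.cauchySeq_iff]
  intro ε hε
  obtain ⟨N, hN⟩ := hg.2.1 ε hε
  refine ⟨N, fun p hp q hq => ?_⟩
  rw [Real.dist_eq]
  calc |simpleInt m (g p) - simpleInt m (g q)|
      = |simpleInt m (g p - g q)| := by rw [simpleInt_sub hA hm (hg.1 p) (hg.1 q)]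
    _ ≤ simpleInt m (fun x => |(g p - g q) x|) :=
        abs_simpleInt_le hA hm hmp (simple_sub hA (hg.1 p) (hg.1 q))
    _ = simpleInt m (fun x => |g p x - g q x|) := rfl
    _ < ε := hN p hp q hq

/-- THE CORE LEMMA: two approximating sequences of the same function are
equivalent in mean. -/
lemma core_tendsto (hA : IsAlg 𝒜) (hm : IsFinAdd 𝒜 m) (hmp : IsPos 𝒜 m)
    {f : Ω → ℝ} {g h : ℕ → Ω → ℝ} (hg : ApproxSeq 𝒜 m f g) (hh : ApproxSeq 𝒜 m f h) :
    Tendsto (fun n => simpleInt m (fun x => |g n x - h n x|)) atTop (nhds 0) := by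
  rw [Metric.tendsto_atTop]
  intro ρ hρ
  have hmU0 : 0 ≤ m Set.univ := hmp _ (alg_univ hA)
  set mU := m Set.univ with hmU
  set η := ρ / 4 with hη
  have hηpos : 0 < η := by rw [hη]; linarith
  obtain ⟨δg, hδgpos, hδgP⟩ := uac hA hm hmp hg.1 hg.2.1 η hηpos
  obtain ⟨δh, hδhpos, hδhP⟩ := uac hA hm hmp hh.1 hh.2.1 η hηpos
  set δ := min δg δh with hδ
  have hδpos : 0 < δ := lt_min hδgpos hδhpos
  set ε' := η / (mU + 1) with hε'
  have hε'pos : 0 < ε' := by rw [hε']; positivity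
  have hgl := hg.2.2 (ε' / 2) (by linarith)
  have hhl := hh.2.2 (ε' / 2) (by linarith)
  have hev : ∀ᶠ n in atTop,
      outerOf 𝒜 m {x | ε' / 2 ≤ |g n x - f x|} < δ / 2 ∧
      outerOf 𝒜 m {x | ε' / 2 ≤ |h n x - f x|} < δ / 2 := by
    apply Filter.Eventually.and
    · exact hgl.eventually_lt_const (by linarith)
    · exact hhl.eventually_lt_const (by linarith)
  obtain ⟨N, hN⟩ := Filter.eventually_atTop.1 hev
  refine ⟨N, fun n hn => ?_⟩
  obtain ⟨hgn, hhn⟩ := hN n hn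
  -- the level set for |g n - h n| is covered
  have hincl : {x | ε' ≤ |g n x - h n x|} ⊆
      {x | ε' / 2 ≤ |g n x - f x|} ∪ {x | ε' / 2 ≤ |h n x - f x|} := by
    intro x hx
    simp only [Set.mem_setOf_eq] at hx
    rw [Set.mem_union]
    by_contra hcon
    push_neg at hcon
    simp only [Set.mem_setOf_eq, not_le] at hcon
    obtain ⟨h1, h2⟩ := hcon
    have h3 : |g n x - h n x| ≤ |g n x - f x| + |h n x - f x| := by
      calc |g n x - h n x| = |(g n x - f x) - (h n x - f x)| := by ring_nf
        _ ≤ |g n x - f x| + |h n x - f x| := abs_sub _ _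
    linarith
  have houter : outerOf 𝒜 m {x | ε' ≤ |g n x - h n x|} < δ := by
    calc outerOf 𝒜 m {x | ε' ≤ |g n x - h n x|}
        ≤ outerOf 𝒜 m {x | ε' / 2 ≤ |g n x - f x|} +
          outerOf 𝒜 m {x | ε' / 2 ≤ |h n x - f x|} := outer_subadd hA hm hmp hincl
      _ < δ / 2 + δ / 2 := add_lt_add hgn hhn
      _ = δ := by ring
  obtain ⟨A, hAm, hsubA, hmA⟩ := exists_cover_lt hA houter
  -- split the integral
  have hsimpd : IsSimple 𝒜 (fun x => |g n x - h n x|) :=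
    simple_abs hA (simple_comp2 hA (hg.1 n) (hh.1 n) (· - ·))
  have hsplitfun : (fun x => |g n x - h n x|) =
      (fun x => |g n x - h n x| * ind A x) + (fun x => |g n x - h n x| * ind Aᶜ x) := by
    funext x
    simp only [Pi.add_apply]
    by_cases hx : x ∈ A
    · rw [ind_apply_mem hx, ind_apply_not_mem (by simpa using hx)]; ring
    · rw [ind_apply_not_mem hx, ind_apply_mem (by simpa using hx)]; ring
  have hs1 : IsSimple 𝒜 (fun x => |g n x - h n x| * ind A x) :=
    simple_mul hA hsimpd (simple_ind hA hAm)
  have hs2 : IsSimple 𝒜 (fun x => |g n x - h n x| * ind Aᶜ x) :=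
    simple_mul hA hsimpd (simple_ind hA (alg_compl hA hAm))
  have hsplit : simpleInt m (fun x => |g n x - h n x|) =
      simpleInt m (fun x => |g n x - h n x| * ind A x) +
      simpleInt m (fun x => |g n x - h n x| * ind Aᶜ x) := by
    conv_lhs => rw [hsplitfun]
    exact simpleInt_add hA hm hs1 hs2
  -- first piece: < 2η via uac
  have hpiece1 : simpleInt m (fun x => |g n x - h n x| * ind A x) <  2 * η := by
    have hmAg : m A < δg := lt_of_lt_of_le hmA (min_le_left _ _)
    have hmAh : m A < δh := lt_of_lt_of_le hmA (min_le_right _ _)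
    have hb1 := hδgP n A hAm hmAg
    have hb2 := hδhP n A hAm hmAh
    have hmono : simpleInt m (fun x => |g n x - h n x| * ind A x) ≤
        simpleInt m (fun x => |g n x| * ind A x) +
        simpleInt m (fun x => |h n x| * ind A x) := by
      have hsa : IsSimple 𝒜 (fun x => |g n x| * ind A x) :=
        simple_mul hA (simple_abs hA (hg.1 n)) (simple_ind hA hAm)
      have hsb : IsSimple 𝒜 (fun x => |h n x| * ind A x) :=
        simple_mul hA (simple_abs hA (hh.1 n)) (simple_ind hA hAm)
      rw [← simpleInt_add hA hm hsa hsb]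
      apply simpleInt_mono hA hm hmp hs1 (simple_add hA hsa hsb)
      intro x
      simp only [Pi.add_apply]
      rw [← add_mul]
      apply mul_le_mul_of_nonneg_right _ (ind_nonneg A x)
      exact abs_sub _ _
    linarith
  -- second piece: ≤ ε' * mU ≤ η
  have hpiece2 : simpleInt m (fun x => |g n x - h n x| * ind Aᶜ x) ≤ η := by
    have hle : simpleInt m (fun x => |g n x - h n x| * ind Aᶜ x) ≤
        simpleInt m (fun _ : Ω => ε') := by
      apply simpleInt_mono hA hm hmp hs2 (simple_const hA ε')
      intro x
      by_cases hx : x ∈ A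
      · rw [ind_apply_not_mem (by simpa using hx), mul_zero]; linarith
      · rw [ind_apply_mem (by simpa using hx), mul_one]
        have hxnot : x ∉ {x | ε' ≤ |g n x - h n x|} := fun hmem => hx (hsubA hmem)
        simp only [Set.mem_setOf_eq, not_le] at hxnot
        linarith
    rw [simpleInt_const hm.1 (alg_univ hA)] at hle
    calc simpleInt m (fun x => |g n x - h n x| * ind Aᶜ x) ≤ ε' * mU := hle
      _ ≤ η := by
          rw [hε']
          rw [div_mul_eq_mul_div, div_le_iff₀ (by linarith)]
          nlinarith
  -- conclude
  have hnonneg : 0 ≤ simpleInt m (fun x => |g n x - h n x|) :=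
    simpleInt_nonneg hm.1 hmp hsimpd (fun x => abs_nonneg _)
  rw [Real.dist_eq, sub_zero, abs_of_nonneg hnonneg]
  calc simpleInt m (fun x => |g n x - h n x|) < 2 * η + η := by linarith
    _ < ρ := by rw [hη]; linarith

/-- the Dunford-Schwartz integral is THE limit of the integrals of any
approximating sequence. -/
lemma dsInt_eq_limit (hA : IsAlg 𝒜) (hm : IsFinAdd 𝒜 m) (hmp : IsPos 𝒜 m)
    {f : Ω → ℝ} {g : ℕ → Ω → ℝ} (hg : ApproxSeq 𝒜 m f g) {L : ℝ}
    (hL : Tendsto (fun n => simpleInt m (g n)) atTop (nhds L)) :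
    dsInt 𝒜 m f = L := by
  have hset : {I | ∃ g', ApproxSeq 𝒜 m f g' ∧
      Tendsto (fun n => simpleInt m (g' n)) atTop (nhds I)} = {L} := by
    apply Set.eq_singleton_iff_unique_mem.2
    refine ⟨⟨g, hg, hL⟩, ?_⟩
    rintro I ⟨g', hg', hI⟩
    have hdiff := core_tendsto hA hm hmp hg' hg
    have h1 : Tendsto (fun n => simpleInt m (g' n) - simpleInt m (g n)) atTop
        (nhds (I - L)) := hI.sub hL
    have h3 : Tendsto (fun n => |simpleInt m (g' n) - simpleInt m (g n)|) atTop
        (nhds |I - L|) := h1.abs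
    have h2 : ∀ n, |simpleInt m (g' n) - simpleInt m (g n)| ≤
        simpleInt m (fun x => |g' n x - g n x|) := by
      intro n
      calc |simpleInt m (g' n) - simpleInt m (g n)|
          = |simpleInt m (g' n - g n)| := by rw [simpleInt_sub hA hm (hg'.1 n) (hg.1 n)]
        _ ≤ simpleInt m (fun x => |(g' n - g n) x|) :=
            abs_simpleInt_le hA hm hmp (simple_sub hA (hg'.1 n) (hg.1 n))
        _ = simpleInt m (fun x => |g' n x - g n x|) := rfl
    have habs : |I - L| ≤ 0 := le_of_tendsto_of_tendsto' h3 hdiff h2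
    have : |I - L| = 0 := le_antisymm habs (abs_nonneg _)
    have := abs_eq_zero.1 this
    linarith
  unfold dsInt
  rw [hset, csInf_singleton]

lemma integral_limit (hA : IsAlg 𝒜) (hm : IsFinAdd 𝒜 m) (hmp : IsPos 𝒜 m)
    {f : Ω → ℝ} {g : ℕ → Ω → ℝ} (hg : ApproxSeq 𝒜 m f g) :
    Tendsto (fun n => simpleInt m (g n)) atTop (nhds (dsInt 𝒜 m f)) := by
  obtain ⟨L, hL⟩ := cauchySeq_tendsto_of_complete (approx_cauchyInt hA hm hmp hg)
  rw [dsInt_eq_limit hA hm hmp hg hL]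
  exact hL

lemma approx_const (hA : IsAlg 𝒜) (hm : IsFinAdd 𝒜 m) (hmp : IsPos 𝒜 m)
    {s : Ω → ℝ} (hs : IsSimple 𝒜 s) : ApproxSeq 𝒜 m s (fun _ => s) := by
  refine ⟨fun _ => hs, ?_, ?_⟩
  · intro ε hε
    refine ⟨0, fun p _ q _ => ?_⟩
    have h0 : (fun x => |s x - s x|) = (fun _ : Ω => (0:ℝ)) := by funext x; simp
    rw [h0, simpleInt_zero hm.1]
    exact hε
  · intro ε hε
    have hempty : ∀ n : ℕ, {x | ε ≤ |s x - s x|} = (∅ : Set Ω) := by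
      intro n
      ext x
      simp only [Set.mem_setOf_eq, sub_self, abs_zero, Set.mem_empty_iff_false, iff_false,
        not_le]
      exact hε
    have : (fun _ : ℕ => outerOf 𝒜 m {x | ε ≤ |s x - s x|}) =
        (fun _ : ℕ => (0:ℝ)) := by
      funext n
      rw [hempty n, outer_empty hA hm hmp]
    rw [this]
    exact tendsto_const_nhds

lemma memL1_simple (hA : IsAlg 𝒜) (hm : IsFinAdd 𝒜 m) (hmp : IsPos 𝒜 m)
    {s : Ω → ℝ} (hs : IsSimple 𝒜 s) : MemL1 𝒜 m s :=
  ⟨fun _ => s, approx_const hA hm hmp hs⟩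

lemma dsInt_simple (hA : IsAlg 𝒜) (hm : IsFinAdd 𝒜 m) (hmp : IsPos 𝒜 m)
    {s : Ω → ℝ} (hs : IsSimple 𝒜 s) : dsInt 𝒜 m s = simpleInt m s :=
  dsInt_eq_limit hA hm hmp (approx_const hA hm hmp hs) tendsto_const_nhds

/-- |g n| approximates |f| -/
lemma approx_abs (hA : IsAlg 𝒜) (hm : IsFinAdd 𝒜 m) (hmp : IsPos 𝒜 m)
    {f : Ω → ℝ} {g : ℕ → Ω → ℝ} (hg : ApproxSeq 𝒜 m f g) :
    ApproxSeq 𝒜 m (fun x => |f x|) (fun n x => |g n x|) := by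
  refine ⟨fun n => simple_abs hA (hg.1 n), ?_, ?_⟩
  · intro ε hε
    obtain ⟨N, hN⟩ := hg.2.1 ε hε
    refine ⟨N, fun p hp q hq => ?_⟩
    show simpleInt m (fun x => abs (abs (g p x) - abs (g q x))) < ε
    calc simpleInt m (fun x => abs (abs (g p x) - abs (g q x)))
        ≤ simpleInt m (fun x => |g p x - g q x|) := by
          apply simpleInt_mono hA hm hmp
            (simple_abs hA (simple_comp2 hA (hg.1 p) (hg.1 q)
              (fun u v => abs u - abs v)))
            (simple_abs hA (simple_comp2 hA (hg.1 p) (hg.1 q) (· - ·)))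
          intro x
          exact abs_abs_sub_abs_le_abs_sub _ _
      _ < ε := hN p hp q hq
  · intro ε hε
    show Tendsto (fun n => outerOf 𝒜 m {x | ε ≤ abs (abs (g n x) - abs (f x))})
      atTop (nhds 0)
    apply squeeze_zero (fun n => outer_nonneg hA hmp _) _ (hg.2.2 ε hε)
    intro n
    apply outer_mono hA hmp
    intro x hx
    simp only [Set.mem_setOf_eq] at hx ⊢
    exact le_trans hx (abs_abs_sub_abs_le_abs_sub _ _)

/-- shifting an approximating sequence by the n-th term : g m - g n approximates f - g n -/
lemma approx_shift (hA : IsAlg 𝒜) {f : Ω → ℝ} {g : ℕ → Ω → ℝ}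
    (hg : ApproxSeq 𝒜 m f g) (n : ℕ) :
    ApproxSeq 𝒜 m (fun x => f x - g n x) (fun k x => g k x - g n x) := by
  refine ⟨fun k => simple_comp2 hA (hg.1 k) (hg.1 n) (· - ·), ?_, ?_⟩
  · intro ε hε
    obtain ⟨N, hN⟩ := hg.2.1 ε hε
    refine ⟨N, fun p hp q hq => ?_⟩
    show simpleInt m (fun x => |(g p x - g n x) - (g q x - g n x)|) < ε
    have : (fun x => |(g p x - g n x) - (g q x - g n x)|) =
        (fun x => |g p x - g q x|) := by funext x; ring_nf
    rw [this]
    exact hN p hp q hq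
  · intro ε hε
    show Tendsto (fun k => outerOf 𝒜 m {x | ε ≤ |(g k x - g n x) - (f x - g n x)|})
      atTop (nhds 0)
    have : ∀ k, {x | ε ≤ |(g k x - g n x) - (f x - g n x)|} = {x | ε ≤ |g k x - f x|} := by
      intro k; ext x; simp only [Set.mem_setOf_eq]; ring_nf
    have heq : (fun k => outerOf 𝒜 m {x | ε ≤ |(g k x - g n x) - (f x - g n x)|}) =
        (fun k => outerOf 𝒜 m {x | ε ≤ |g k x - f x|}) := by
      funext k; rw [this k]
    rw [heq]
    exact hg.2.2 ε hε

end FRep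
namespace FRep
variable {Ω : Type*} {𝒜 : Set (Set Ω)}

/-- φ of a simple function is the simpleInt against μ B := φ (ind B). -/
lemma phi_simple (hA : IsAlg 𝒜) {l : Set Ω → ℝ} (hl : IsFinAdd 𝒜 l) (hpos : IsPos 𝒜 l)
    {φ : (Ω → ℝ) → ℝ}
    (hadd : ∀ f g : Ω → ℝ, MemL1 𝒜 l f → MemL1 𝒜 l g → φ (f + g) = φ f + φ g)
    (hsmul : ∀ (c : ℝ) (f : Ω → ℝ), MemL1 𝒜 l f → φ (c • f) = c * φ f)
    {s : Ω → ℝ} (hs : IsSimple 𝒜 s) :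
    φ s = simpleInt (fun B => φ (ind B)) s := by
  classical
  have hφ0 : φ (fun _ : Ω => (0:ℝ)) = 0 := by
    have hmem : MemL1 𝒜 l (fun _ : Ω => (0:ℝ)) :=
      memL1_simple hA hl hpos (simple_const hA 0)
    have h1 := hsmul 0 (fun _ : Ω => (0:ℝ)) hmem
    have h00 : (0:ℝ) • (fun _ : Ω => (0:ℝ)) = (fun _ : Ω => (0:ℝ)) := by funext x; simp
    rw [h00] at h1
    linarith
  set F := hs.1.toFinset with hF
  -- partial sums are simple
  have hsum_simple : ∀ F' : Finset ℝ, IsSimple 𝒜 (∑ c ∈ F', c • ind (s ⁻¹' {c})) := by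
    intro F'
    induction F' using Finset.induction_on with
    | empty =>
      rw [Finset.sum_empty]
      exact simple_const hA 0
    | @insert a F' hna ih =>
      rw [Finset.sum_insert hna]
      exact simple_add hA (simple_smul hA (simple_ind hA (hs.2 a)) a) ih
  -- φ of partial sums
  have hφsum : ∀ F' : Finset ℝ, φ (∑ c ∈ F', c • ind (s ⁻¹' {c})) =
      ∑ c ∈ F', c * φ (ind (s ⁻¹' {c})) := by
    intro F'
    induction F' using Finset.induction_on with
    | empty =>
      rw [Finset.sum_empty, Finset.sum_empty]
      exact hφ0
    | @insert a F' hna ih =>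
      rw [Finset.sum_insert hna, Finset.sum_insert hna]
      rw [hadd _ _ (memL1_simple hA hl hpos (simple_smul hA (simple_ind hA (hs.2 a)) a))
        (memL1_simple hA hl hpos (hsum_simple F')), ih,
        hsmul a _ (memL1_simple hA hl hpos (simple_ind hA (hs.2 a)))]
  -- decomposition of s
  have hdecomp : s = ∑ c ∈ F, c • ind (s ⁻¹' {c}) := by
    funext x
    rw [Finset.sum_apply]
    have hmem : s x ∈ F := (Set.Finite.mem_toFinset _).2 ⟨x, rfl⟩
    have hzero : ∀ c ∈ F, c ≠ s x → (c • ind (s ⁻¹' {c})) x = 0 := by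
      intro c _ hc
      have hnot : x ∉ s ⁻¹' {c} := by
        simp only [Set.mem_preimage, Set.mem_singleton_iff]
        exact fun h => hc h.symm
      simp only [Pi.smul_apply, smul_eq_mul]
      rw [ind_apply_not_mem hnot, mul_zero]
    rw [Finset.sum_eq_single_of_mem (s x) hmem hzero]
    simp only [Pi.smul_apply, smul_eq_mul]
    rw [ind_apply_mem (show x ∈ s ⁻¹' {s x} from rfl), mul_one]
  have hind0 : (fun B => φ (ind B)) (∅ : Set Ω) = 0 := by
    have h1 : ind (∅ : Set Ω) = (fun _ : Ω => (0:ℝ)) := by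
      funext x; exact ind_apply_not_mem (Set.notMem_empty x)
    show φ (ind (∅ : Set Ω)) = 0
    rw [h1]; exact hφ0
  have hkey := simpleInt_eq_sum (m := fun B => φ (ind B)) hind0
    (fun y hy => (Set.Finite.mem_toFinset _).2 hy : Set.range s ⊆ ↑F)
  conv_lhs => rw [hdecomp]
  rw [hφsum F, hkey]

/-- comparison of outer measures -/
lemma outer_le_scale (hA : IsAlg 𝒜) {l μ : Set Ω → ℝ} (hl : IsFinAdd 𝒜 l) (hlp : IsPos 𝒜 l)
    (hμp : IsPos 𝒜 μ) {K : ℝ} (hK0 : 0 ≤ K) (hle : ∀ A ∈ 𝒜, μ A ≤ K * l A) (S : Set Ω) :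
    outerOf 𝒜 μ S ≤ K * outerOf 𝒜 l S := by
  by_contra hcon
  push_neg at hcon
  set gp := outerOf 𝒜 μ S - K * outerOf 𝒜 l S with hgp
  have hgp0 : 0 < gp := by rw [hgp]; linarith
  obtain ⟨x, ⟨A, hAm, hSA, rfl⟩, hlt⟩ :=
    Real.lt_sInf_add_pos (outer_set_nonempty (m := l) hA S) (show 0 < gp / (K+1) by positivity)
  have h1 : outerOf 𝒜 μ S ≤ μ A := outer_le hμp hAm hSA
  have h2 : μ A ≤ K * l A := hle A hAm
  have h3 : l A < outerOf 𝒜 l S + gp / (K+1) := hlt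
  have h4 : K * l A ≤ K * (outerOf 𝒜 l S + gp / (K+1)) :=
    mul_le_mul_of_nonneg_left (le_of_lt h3) hK0
  have hq : 0 < gp / (K+1) := by positivity
  have h5 : K * (gp / (K+1)) < (K+1) * (gp / (K+1)) := mul_lt_mul_of_pos_right (lt_add_one K) hq
  have hne : K + 1 ≠ 0 := by positivity
  have h6 : (K+1) * (gp / (K+1)) = gp := by field_simp
  have h7 := h1.trans (h2.trans h4)
  rw [mul_add] at h7
  rw [hgp] at *
  linarith

end FRep

open FRep

/-- representation of a positive continuous linear functional on L¹(λ). -/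
theorem functional_representation {Ω : Type*} (𝒜 : Set (Set Ω)) (hA : IsAlg 𝒜)
    (l : Set Ω → ℝ) (hl : IsFinAdd 𝒜 l) (hpos : IsPos 𝒜 l)
    (φ : (Ω → ℝ) → ℝ)
    (hadd : ∀ f g : Ω → ℝ, MemL1 𝒜 l f → MemL1 𝒜 l g → φ (f + g) = φ f + φ g)
    (hsmul : ∀ (c : ℝ) (f : Ω → ℝ), MemL1 𝒜 l f → φ (c • f) = c * φ f)
    (hφpos : ∀ f : Ω → ℝ, MemL1 𝒜 l f → (∀ x, 0 ≤ f x) → 0 ≤ φ f)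
    (hcont : ∃ Kc : ℝ, ∀ f : Ω → ℝ, MemL1 𝒜 l f →
      |φ f| ≤ Kc * dsInt 𝒜 l (fun x => |f x|)) :
    ∃ μ : Set Ω → ℝ, IsFinAdd 𝒜 μ ∧ IsPos 𝒜 μ ∧ AC 𝒜 μ l ∧
      (∀ f : Ω → ℝ, MemL1 𝒜 l f → φ f = dsInt 𝒜 μ f) ∧
      ∀ B ∈ 𝒜, 0 < l B →
        μ B ≤ (sSup {y | ∃ f : Ω → ℝ, MemL1 𝒜 l f ∧
          dsInt 𝒜 l (fun x => |f x|) ≤ 1 ∧ y = |φ f|}) * l B := by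
  classical
  obtain ⟨Kc, hKc⟩ := hcont
  set K := max Kc 0 with hKdef
  have hK0 : 0 ≤ K := le_max_right _ _
  have hd0 : ∀ f : Ω → ℝ, MemL1 𝒜 l f → 0 ≤ dsInt 𝒜 l (fun x => |f x|) := by
    rintro f ⟨g, hg⟩
    have h1 := integral_limit hA hl hpos (approx_abs hA hl hpos hg)
    refine ge_of_tendsto h1 ?_
    apply Filter.Eventually.of_forall
    intro n
    exact simpleInt_nonneg hl.1 hpos (simple_abs hA (hg.1 n)) (fun x => abs_nonneg _)
  have hKf : ∀ f : Ω → ℝ, MemL1 𝒜 l f → |φ f| ≤ K * dsInt 𝒜 l (fun x => |f x|) :=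
    fun f hf => le_trans (hKc f hf)
      (mul_le_mul_of_nonneg_right (le_max_left _ _) (hd0 f hf))
  set μ : Set Ω → ℝ := fun B => φ (ind B) with hμdef
  have hφ0 : φ (fun _ : Ω => (0:ℝ)) = 0 := by
    have hmem : MemL1 𝒜 l (fun _ : Ω => (0:ℝ)) :=
      memL1_simple hA hl hpos (simple_const hA 0)
    have h1 := hsmul 0 (fun _ : Ω => (0:ℝ)) hmem
    have h00 : (0:ℝ) • (fun _ : Ω => (0:ℝ)) = (fun _ : Ω => (0:ℝ)) := by funext x; simp
    rw [h00] at h1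
    linarith
  have hindmem : ∀ B ∈ 𝒜, MemL1 𝒜 l (ind B) :=
    fun B hB => memL1_simple hA hl hpos (simple_ind hA hB)
  have habsind : ∀ B : Set Ω, (fun x => |ind B x|) = ind B :=
    fun B => funext fun x => abs_of_nonneg (ind_nonneg B x)
  have hdsind : ∀ B ∈ 𝒜, dsInt 𝒜 l (fun x => |ind B x|) = l B := by
    intro B hB
    rw [habsind B, dsInt_simple hA hl hpos (simple_ind hA hB), simpleInt_ind hl hB]
  have hμpos : IsPos 𝒜 μ := fun B hB => hφpos _ (hindmem B hB) (ind_nonneg B)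
  have hμleKl : ∀ B ∈ 𝒜, μ B ≤ K * l B := by
    intro B hB
    have h1 : μ B ≤ |φ (ind B)| := le_abs_self _
    have h2 := hKf (ind B) (hindmem B hB)
    rw [hdsind B hB] at h2
    exact h1.trans h2
  have hμ0 : μ ∅ = 0 := by
    show φ (ind (∅ : Set Ω)) = 0
    have h1 : ind (∅ : Set Ω) = (fun _ : Ω => (0:ℝ)) :=
      funext fun x => ind_apply_not_mem (Set.notMem_empty x)
    rw [h1]; exact hφ0
  have hμadd : ∀ A ∈ 𝒜, ∀ B ∈ 𝒜, Disjoint A B → μ (A ∪ B) = μ A + μ B := by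
    intro A hAm B hBm hdis
    have h1 : ind (A ∪ B) = ind A + ind B := by
      funext x
      simp only [Pi.add_apply]
      by_cases hx : x ∈ A
      · have hxB : x ∉ B := fun hB' => Set.disjoint_left.1 hdis hx hB'
        rw [ind_apply_mem (Set.mem_union_left _ hx), ind_apply_mem hx,
          ind_apply_not_mem hxB]
        ring
      · by_cases hxB : x ∈ B
        · rw [ind_apply_mem (Set.mem_union_right _ hxB), ind_apply_not_mem hx,
            ind_apply_mem hxB]
          ring
        · rw [ind_apply_not_mem (fun hc => hc.elim hx hxB), ind_apply_not_mem hx,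
            ind_apply_not_mem hxB]
          ring
    show φ (ind (A ∪ B)) = φ (ind A) + φ (ind B)
    rw [h1]
    exact hadd _ _ (hindmem A hAm) (hindmem B hBm)
  have hμfin : IsFinAdd 𝒜 μ := by
    refine ⟨hμ0, hμadd, K * l Set.univ, ?_⟩
    intro A hAm
    rw [abs_of_nonneg (hμpos A hAm)]
    exact (hμleKl A hAm).trans (mul_le_mul_of_nonneg_left
      (m_mono hA hl hpos hAm (alg_univ hA) (Set.subset_univ A)) hK0)
  have hφs : ∀ s : Ω → ℝ, IsSimple 𝒜 s → φ s = simpleInt μ s :=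
    fun s hs => phi_simple hA hl hpos hadd hsmul hs
  -- transfer of approximating sequences from l to μ
  have htrans : ∀ (f : Ω → ℝ) (g : ℕ → Ω → ℝ), ApproxSeq 𝒜 l f g → ApproxSeq 𝒜 μ f g := by
    intro f g hg
    refine ⟨hg.1, ?_, ?_⟩
    · intro ε hε
      obtain ⟨N, hN⟩ := hg.2.1 (ε / (K+1)) (by positivity)
      refine ⟨N, fun p hp q hq => ?_⟩
      have hsim : IsSimple 𝒜 (fun x => |g p x - g q x|) :=
        simple_abs hA (simple_comp2 hA (hg.1 p) (hg.1 q) (· - ·))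
      have h1 : simpleInt μ (fun x => |g p x - g q x|) ≤
          simpleInt (fun A => K * l A) (fun x => |g p x - g q x|) :=
        simpleInt_mono_measure hμ0 (by show K * l ∅ = 0; rw [hl.1, mul_zero])
          hμleKl hsim (fun x => abs_nonneg _)
      have h2 : simpleInt (fun A => K * l A) (fun x => |g p x - g q x|) =
          K * simpleInt l (fun x => |g p x - g q x|) :=
        simpleInt_scale_measure hl.1 K hsim.1
      have h3 := hN p hp q hq
      have h4 : K * simpleInt l (fun x => |g p x - g q x|) ≤ K * (ε / (K+1)) :=
        mul_le_mul_of_nonneg_left (le_of_lt h3) hK0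
      have h5 : K * (ε/(K+1)) < ε := by
        have hq0 : 0 < ε/(K+1) := by positivity
        have h6 := mul_lt_mul_of_pos_right (lt_add_one K) hq0
        have hne : K + 1 ≠ 0 := by positivity
        have he : (K+1) * (ε/(K+1)) = ε := by field_simp
        linarith
      linarith
    · intro ε hε
      apply squeeze_zero (fun n => outer_nonneg hA hμpos _)
        (fun n => outer_le_scale hA hl hpos hμpos hK0 hμleKl _)
      have h7 := (hg.2.2 ε hε).const_mul K
      rwa [mul_zero] at h7
  -- the representation
  have hrep : ∀ f : Ω → ℝ, MemL1 𝒜 l f → φ f = dsInt 𝒜 μ f := by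
    rintro f ⟨g, hg⟩
    have hμg := htrans f g hg
    set D : ℕ → ℝ := fun n => dsInt 𝒜 l (fun x => |f x - g n x|) with hDdef
    have hDlim : ∀ n, Tendsto (fun k => simpleInt l (fun x => |g k x - g n x|))
        atTop (nhds (D n)) := by
      intro n
      exact integral_limit hA hl hpos (approx_abs hA hl hpos (approx_shift hA hg n))
    have hD0 : ∀ n, 0 ≤ D n := by
      intro n
      exact hd0 (fun x => f x - g n x) ⟨_, approx_shift hA hg n⟩
    have hDsmall : ∀ ε > (0:ℝ), ∃ N, ∀ n ≥ N, D n ≤ ε := by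
      intro ε hε
      obtain ⟨N, hN⟩ := hg.2.1 ε hε
      refine ⟨N, fun n hn => ?_⟩
      refine le_of_tendsto (hDlim n) ?_
      rw [Filter.eventually_atTop]
      exact ⟨N, fun k hk => le_of_lt (hN k hk n hn)⟩
    have hDto0 : Tendsto D atTop (nhds 0) := by
      rw [Metric.tendsto_atTop]
      intro ε hε
      obtain ⟨N, hN⟩ := hDsmall (ε/2) (by linarith)
      refine ⟨N, fun n hn => ?_⟩
      rw [Real.dist_eq, sub_zero, abs_of_nonneg (hD0 n)]
      exact lt_of_le_of_lt (hN n hn) (by linarith)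
    have hphidiff : ∀ n, |φ f - φ (g n)| ≤ K * D n := by
      intro n
      have hmemd : MemL1 𝒜 l (fun x => f x - g n x) := ⟨_, approx_shift hA hg n⟩
      have hsum : (fun x => f x - g n x) + g n = f := by funext x; simp
      have h1 := hadd (fun x => f x - g n x) (g n) hmemd
        (memL1_simple hA hl hpos (hg.1 n))
      rw [hsum] at h1
      have h3 : |φ (fun x => f x - g n x)| ≤ K * D n := hKf (fun x => f x - g n x) hmemd
      have h4 : φ f - φ (g n) = φ (fun x => f x - g n x) := by linarith
      rw [h4]; exact h3
    have hφgn : Tendsto (fun n => φ (g n)) atTop (nhds (φ f)) := by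
      rw [Metric.tendsto_atTop]
      intro ε hε
      have hKD : Tendsto (fun n => K * D n) atTop (nhds 0) := by
        have h8 := hDto0.const_mul K; rwa [mul_zero] at h8
      obtain ⟨N, hN⟩ := Filter.eventually_atTop.1 (hKD.eventually_lt_const hε)
      refine ⟨N, fun n hn => ?_⟩
      rw [Real.dist_eq, abs_sub_comm]
      exact lt_of_le_of_lt (hphidiff n) (hN n hn)
    have heq : (fun n => simpleInt μ (g n)) = (fun n => φ (g n)) :=
      funext fun n => (hφs (g n) (hg.1 n)).symm
    have hμlim : Tendsto (fun n => simpleInt μ (g n)) atTop (nhds (φ f)) := by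
      rw [heq]; exact hφgn
    exact (dsInt_eq_limit hA hμfin hμpos hμg hμlim).symm
  -- absolute continuity
  obtain ⟨Cl, hCl⟩ := hl.2.2
  have htvl : ∀ E ∈ 𝒜, l E ≤ tv 𝒜 l E := by
    intro E hE
    have hbdd : BddAbove {x | ∃ B ∈ 𝒜, B ⊆ E ∧ x = l B - l (E \ B)} := by
      refine ⟨2 * Cl, ?_⟩
      rintro x ⟨B, hBm, hBE, rfl⟩
      have h1 := abs_le.1 (hCl B hBm)
      have h2 := abs_le.1 (hCl (E \ B) (alg_diff hA hE hBm))
      linarith [h1.1, h1.2, h2.1, h2.2]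
    have hmem : l E - l (E \ E) ∈ {x | ∃ B ∈ 𝒜, B ⊆ E ∧ x = l B - l (E \ B)} :=
      ⟨E, hE, Set.Subset.refl E, rfl⟩
    have h9 := le_csSup hbdd hmem
    rw [Set.diff_self] at h9
    rw [hl.1] at h9
    have : tv 𝒜 l E = sSup {x | ∃ B ∈ 𝒜, B ⊆ E ∧ x = l B - l (E \ B)} := rfl
    rw [this]
    linarith
  have htvμ : ∀ E ∈ 𝒜, tv 𝒜 μ E ≤ K * l E := by
    intro E hE
    show sSup {x | ∃ B ∈ 𝒜, B ⊆ E ∧ x = μ B - μ (E \ B)} ≤ K * l E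
    refine csSup_le ⟨μ ∅ - μ (E \ ∅), ⟨∅, alg_empty hA, Set.empty_subset E, rfl⟩⟩ ?_
    rintro x ⟨B, hBm, hBE, rfl⟩
    have h1 : 0 ≤ μ (E \ B) := hμpos _ (alg_diff hA hE hBm)
    have h2 : μ B ≤ K * l B := hμleKl B hBm
    have h3 : l B ≤ l E := m_mono hA hl hpos hBm hE hBE
    have h4 : K * l B ≤ K * l E := mul_le_mul_of_nonneg_left h3 hK0
    linarith
  have hAC : AC 𝒜 μ l := by
    intro ε hε
    refine ⟨ε/(K+1), by positivity, ?_⟩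
    intro E hE htvE
    have h1 : tv 𝒜 μ E ≤ K * l E := htvμ E hE
    have h2 : l E ≤ tv 𝒜 l E := htvl E hE
    have h3 : l E < ε/(K+1) := lt_of_le_of_lt h2 htvE
    have h4 : K * l E ≤ K * (ε/(K+1)) := mul_le_mul_of_nonneg_left (le_of_lt h3) hK0
    have h5 : K * (ε/(K+1)) < ε := by
      have hq0 : 0 < ε/(K+1) := by positivity
      have h6 := mul_lt_mul_of_pos_right (lt_add_one K) hq0
      have hne : K + 1 ≠ 0 := by positivity
      have he : (K+1) * (ε/(K+1)) = ε := by field_simp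
      linarith
    linarith
  -- final bound
  refine ⟨μ, hμfin, hμpos, hAC, hrep, ?_⟩
  intro B hB hlB
  set f₀ : Ω → ℝ := (l B)⁻¹ • ind B with hf₀def
  have hf₀s : IsSimple 𝒜 f₀ := simple_smul hA (simple_ind hA hB) (l B)⁻¹
  have hf₀mem : MemL1 𝒜 l f₀ := memL1_simple hA hl hpos hf₀s
  have hf₀abs : (fun x => |f₀ x|) = f₀ := by
    funext x
    apply abs_of_nonneg
    show 0 ≤ (l B)⁻¹ * ind B x
    exact mul_nonneg (inv_nonneg.2 (le_of_lt hlB)) (ind_nonneg B x)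
  have hf₀int : dsInt 𝒜 l (fun x => |f₀ x|) = 1 := by
    rw [hf₀abs, hf₀def, dsInt_simple hA hl hpos hf₀s, simpleInt_smul_ind hA hl hB]
    field_simp
  have hmemSv : |φ f₀| ∈ {y | ∃ f : Ω → ℝ, MemL1 𝒜 l f ∧
      dsInt 𝒜 l (fun x => |f x|) ≤ 1 ∧ y = |φ f|} := ⟨f₀, hf₀mem, le_of_eq hf₀int, rfl⟩
  have hbdd : BddAbove {y | ∃ f : Ω → ℝ, MemL1 𝒜 l f ∧
      dsInt 𝒜 l (fun x => |f x|) ≤ 1 ∧ y = |φ f|} := by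
    refine ⟨K, ?_⟩
    rintro y ⟨f, hf, hint, rfl⟩
    have h1 := hKf f hf
    have h2 : K * dsInt 𝒜 l (fun x => |f x|) ≤ K * 1 :=
      mul_le_mul_of_nonneg_left hint hK0
    rw [mul_one] at h2
    exact h1.trans h2
  have hle := le_csSup hbdd hmemSv
  have hφf₀ : φ f₀ = (l B)⁻¹ * μ B := hsmul (l B)⁻¹ (ind B) (hindmem B hB)
  have hφf₀' : |φ f₀| = (l B)⁻¹ * μ B := by
    rw [hφf₀]
    exact abs_of_nonneg (mul_nonneg (inv_nonneg.2 hlB.le) (hμpos B hB))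
  rw [hφf₀'] at hle
  calc μ B = l B * ((l B)⁻¹ * μ B) := by field_simp
    _ ≤ l B * sSup {y | ∃ f : Ω → ℝ, MemL1 𝒜 l f ∧
          dsInt 𝒜 l (fun x => |f x|) ≤ 1 ∧ y = |φ f|} :=
        mul_le_mul_of_nonneg_left hle hlB.le
    _ = _ := mul_comm _ _
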